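/- Let a > 0, D₁ > 0, τ > 0. The partial derivative of ĥ(r,τ) with respect to r equals (a/√(4·π·D₁·τ³))·exp(−(r−a)²/(4·D₁·τ))·( a/r² − ((r−a)/(2·D₁·τ))·(1 − a/r) ) for all r > 0, and there exists a unique r* > a at which this derivative vanishes on (a,∞); moreover r ↦ ĥ(r,τ) is strictly increasing on (a, r*) and strictly decreasing on (r*, ∞), so h* = ĥ(r*,τ) is the maximum value of ĥ(·,τ) on (a,∞). -/

import Mathlib

open MeasureTheory Real

/-- The channel impulse response at distance `r` and elapsed time `τ`. -/
noncomputable def hCIR (a D₁ τ r : ℝ) : ℝ :=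
  a / Real.sqrt (4 * π * D₁ * τ ^ 3) * (1 - a / r) * Real.exp (-(r - a) ^ 2 / (4 * D₁ * τ))

/-- The partial derivative of the channel impulse response with respect to the distance. -/
noncomputable def hCIRderiv (a D₁ τ r : ℝ) : ℝ :=
  a / Real.sqrt (4 * π * D₁ * τ ^ 3) * Real.exp (-(r - a) ^ 2 / (4 * D₁ * τ))
    * (a / r ^ 2 - (r - a) / (2 * D₁ * τ) * (1 - a / r))

lemma hasDeriv (a D₁ τ : ℝ) (hD₁ : 0 < D₁) (hτ : 0 < τ) (r : ℝ) (hr : 0 < r) :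
    HasDerivAt (fun x => hCIR a D₁ τ x) (hCIRderiv a D₁ τ r) r := by
  have hr0 : r ≠ 0 := hr.ne'
  have hs : Real.sqrt (4 * π * D₁ * τ ^ 3) ≠ 0 := by
    refine (Real.sqrt_pos.mpr ?_).ne'
    positivity
  have hu : HasDerivAt (fun x : ℝ => -(x - a) ^ 2 / (4 * D₁ * τ))
      (-(2 * (r - a)) / (4 * D₁ * τ)) r := by
    have h := ((((hasDerivAt_id r).sub_const a).pow 2).neg).div_const (4 * D₁ * τ)
    convert h using 1
    · rfl
    · rfl
    · rfl
    simp
  have hexp := hu.exp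
  have hinv : HasDerivAt (fun x : ℝ => 1 - a / x) (a / r ^ 2) r := by
    have h := ((hasDerivAt_inv hr0).const_mul a).const_sub 1
    have h2 : (fun x : ℝ => 1 - a / x) = fun x : ℝ => 1 - a * x⁻¹ := by
      funext x; rw [div_eq_mul_inv]
    rw [h2]
    convert h using 1
    · rfl
    · rfl
    field_simp
  have hmul := (hinv.const_mul (a / Real.sqrt (4 * π * D₁ * τ ^ 3))).mul hexp
  convert hmul using 1
  · rfl
  · rfl
  · rfl
  simp only [hCIRderiv]
  field_simp
  ring

lemma deriv_factor (a D₁ τ r : ℝ) (hD₁ : 0 < D₁) (hτ : 0 < τ) (hr : 0 < r) :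
    hCIRderiv a D₁ τ r = a / Real.sqrt (4 * π * D₁ * τ ^ 3)
      * Real.exp (-(r - a) ^ 2 / (4 * D₁ * τ))
      * ((2 * a * D₁ * τ - r * (r - a) ^ 2) / (2 * D₁ * τ * r ^ 2)) := by
  have hr0 : r ≠ 0 := hr.ne'
  simp only [hCIRderiv]
  congr 1
  field_simp

/-- The CIR, as a function of the distance, has the stated derivative, a unique critical
point `r* > a`, is strictly increasing before it and strictly decreasing after it, and
attains its maximum over `(a, ∞)` there. -/
theorem CIR_deriv_and_unique_max (a D₁ τ : ℝ) (ha : 0 < a) (hD₁ : 0 < D₁) (hτ : 0 < τ) :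
    (∀ r : ℝ, 0 < r → HasDerivAt (fun x => hCIR a D₁ τ x) (hCIRderiv a D₁ τ r) r) ∧
    ∃ rstar : ℝ, a < rstar ∧ hCIRderiv a D₁ τ rstar = 0 ∧
      (∀ r : ℝ, a < r → hCIRderiv a D₁ τ r = 0 → r = rstar) ∧
      StrictMonoOn (hCIR a D₁ τ) (Set.Ioc a rstar) ∧
      StrictAntiOn (hCIR a D₁ τ) (Set.Ici rstar) ∧
      ∀ r ∈ Set.Ioi a, hCIR a D₁ τ r ≤ hCIR a D₁ τ rstar := by
  have hC : 0 < a / Real.sqrt (4 * π * D₁ * τ ^ 3) :=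
    div_pos ha (Real.sqrt_pos.mpr (by positivity))
  set f : ℝ → ℝ := fun r => r * (r - a) ^ 2 with hfdef
  have hfmono : StrictMonoOn f (Set.Ici a) := by
    intro x hx y hy hxy
    simp only [Set.mem_Ici] at hx hy
    simp only [hfdef]
    have hy0 : 0 < y := ha.trans_le hy
    have hya : a < y := lt_of_le_of_lt hx hxy
    have hvu : 0 < x + y - 2 * a := by linarith
    nlinarith [mul_nonneg (sub_pos.mpr hxy).le (sq_nonneg (x - a)),
      mul_pos (mul_pos hy0 (sub_pos.mpr hxy)) hvu]
  have hfcont : Continuous f := by fun_prop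
  set k : ℝ := 2 * a * D₁ * τ with hkdef
  have hk0 : 0 < k := by positivity
  -- sign lemmas
  have hpos : ∀ r : ℝ, 0 < r → f r < k → 0 < hCIRderiv a D₁ τ r := by
    intro r hr hlt
    rw [deriv_factor a D₁ τ r hD₁ hτ hr]
    refine mul_pos (mul_pos hC (Real.exp_pos _)) (div_pos ?_ (by positivity))
    simp only [hfdef, hkdef] at hlt ⊢
    linarith
  have hneg : ∀ r : ℝ, 0 < r → k < f r → hCIRderiv a D₁ τ r < 0 := by
    intro r hr hlt
    rw [deriv_factor a D₁ τ r hD₁ hτ hr]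
    refine mul_neg_of_pos_of_neg (mul_pos hC (Real.exp_pos _))
      (div_neg_of_neg_of_pos ?_ (by positivity))
    simp only [hfdef, hkdef] at hlt ⊢
    linarith
  have hzero : ∀ r : ℝ, 0 < r → (hCIRderiv a D₁ τ r = 0 ↔ f r = k) := by
    intro r hr
    rw [deriv_factor a D₁ τ r hD₁ hτ hr]
    constructor
    · intro h
      rcases mul_eq_zero.mp h with h' | h'
      · exact absurd h' (mul_pos hC (Real.exp_pos _)).ne'
      · have := (div_eq_zero_iff.mp h').resolve_right (by positivity)
        simp only [hfdef, hkdef] at this ⊢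
        linarith
    · intro h
      have : 2 * a * D₁ * τ - r * (r - a) ^ 2 = 0 := by
        simp only [hfdef, hkdef] at h; linarith
      rw [this]
      simp
  -- existence of rstar
  obtain ⟨rstar, hrmem, hfr⟩ : ∃ rstar ∈ Set.Icc a (a + max 1 k), f rstar = k := by
    have h1 : a ≤ a + max 1 k := by
      have : (0:ℝ) ≤ max 1 k := le_trans zero_le_one (le_max_left _ _)
      linarith
    apply intermediate_value_Icc h1 hfcont.continuousOn
    constructor
    · simp [hfdef]
      exact hk0.le
    · have hm1 : (1:ℝ) ≤ max 1 k := le_max_left _ _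
      have hmk : k ≤ max 1 k := le_max_right _ _
      simp only [hfdef]
      have h2 : a + max 1 k - a = max 1 k := by ring
      rw [h2]
      nlinarith
  have hra : a < rstar := by
    rcases eq_or_lt_of_le hrmem.1 with h | h
    · exfalso
      have : f rstar = 0 := by simp [hfdef, ← h]
      rw [this] at hfr
      exact hk0.ne hfr
    · exact h
  have hr0star : 0 < rstar := lt_trans ha hra
  have hmono : StrictMonoOn (hCIR a D₁ τ) (Set.Ioc a rstar) := by
    apply strictMonoOn_of_deriv_pos (convex_Ioc a rstar)
    · intro x hx
      exact (hasDeriv a D₁ τ hD₁ hτ x (lt_trans ha hx.1)).continuousAt.continuousWithinAt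
    · intro x hx
      rw [interior_Ioc] at hx
      have hx0 : 0 < x := lt_trans ha hx.1
      rw [(hasDeriv a D₁ τ hD₁ hτ x hx0).deriv]
      apply hpos x hx0
      rw [← hfr]
      exact hfmono (Set.mem_Ici.mpr hx.1.le) (Set.mem_Ici.mpr hra.le) hx.2
  have hanti : StrictAntiOn (hCIR a D₁ τ) (Set.Ici rstar) := by
    apply strictAntiOn_of_deriv_neg (convex_Ici rstar)
    · intro x hx
      exact (hasDeriv a D₁ τ hD₁ hτ x (lt_of_lt_of_le hr0star hx)).continuousAt.continuousWithinAt
    · intro x hx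
      rw [interior_Ici] at hx
      have hx0 : 0 < x := lt_trans hr0star hx
      rw [(hasDeriv a D₁ τ hD₁ hτ x hx0).deriv]
      apply hneg x hx0
      rw [← hfr]
      exact hfmono (Set.mem_Ici.mpr hra.le) (Set.mem_Ici.mpr (lt_trans hra hx).le) hx
  refine ⟨fun r hr => hasDeriv a D₁ τ hD₁ hτ r hr, rstar, hra, ?_, ?_, hmono, hanti, ?_⟩
  · exact (hzero rstar hr0star).mpr hfr
  · intro r hr hd
    have hfr' : f r = k := (hzero r (lt_trans ha hr)).mp hd
    exact hfmono.injOn hr.le (Set.mem_Ici.mpr hra.le) (hfr'.trans hfr.symm)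
  · intro r hr
    rw [Set.mem_Ioi] at hr
    rcases le_or_gt r rstar with h | h
    · rcases eq_or_lt_of_le h with he | hlt
      · rw [he]
      · exact (hmono ⟨hr, h⟩ ⟨hra, le_refl rstar⟩ hlt).le
    · exact (hanti (Set.mem_Ici.mpr (le_refl rstar)) (Set.mem_Ici.mpr h.le) h).le
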